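/- Let W(·|x) = N(x, N), Q* = N(0, Γ + N), and Y ~ W(·|x) for a fixed x ∈ ℝ. Then Var(log(W(Y|x)/Q*(Y))) = (Γ² + 2x²N)/(2(N + Γ)²). -/

import Mathlib

open MeasureTheory ProbabilityTheory Real
open scoped NNReal

namespace AWGNAux
open Set
open scoped ENNReal

lemma integral_Ioi_pow_mul_exp {b : ℝ} (hb : 0 < b) (k : ℕ) :
    ∫ x in Ioi (0:ℝ), x ^ k * rexp (-b * x ^ 2)
      = b ^ (-((k:ℝ) + 1) / 2) * (1 / 2) * Real.Gamma (((k:ℝ) + 1) / 2) := by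
  have h : (-1 : ℝ) < k := lt_of_lt_of_le neg_one_lt_zero (Nat.cast_nonneg k)
  have := integral_rpow_mul_exp_neg_mul_rpow (p := 2) (q := k) (b := b) two_pos h hb
  rw [← this]
  refine setIntegral_congr_fun measurableSet_Ioi (fun y hy => ?_)
  rw [show ((2:ℝ)) = ((2:ℕ):ℝ) by norm_num, Real.rpow_natCast, Real.rpow_natCast]

lemma Gamma_three_halves : Real.Gamma (3 / 2) = Real.sqrt π / 2 := by
  have h := Real.Gamma_add_one (by norm_num : (1/2 : ℝ) ≠ 0)
  rw [show (3/2 : ℝ) = 1/2 + 1 by norm_num, h, Real.Gamma_one_half_eq]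
  ring

lemma Gamma_five_halves : Real.Gamma (5 / 2) = 3 * Real.sqrt π / 4 := by
  have h := Real.Gamma_add_one (by norm_num : (3/2 : ℝ) ≠ 0)
  rw [show (5/2 : ℝ) = 3/2 + 1 by norm_num, h, Gamma_three_halves]
  ring

lemma rpow_inv_neg {t : ℝ} (ht : 0 < t) (r : ℝ) : (t⁻¹) ^ (-r) = t ^ r := by
  rw [Real.inv_rpow ht.le, Real.rpow_neg ht.le, inv_inv]

lemma integral_Ioi_sq_mul_exp (v : ℝ) (hv : 0 < v) :
    ∫ x in Ioi (0:ℝ), x ^ 2 * rexp (-(2*v)⁻¹ * x ^ 2)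
      = (2*v) * Real.sqrt (2*v) * Real.sqrt π / 4 := by
  have hb : (0:ℝ) < (2*v)⁻¹ := by positivity
  rw [integral_Ioi_pow_mul_exp hb 2]
  have h1 : (-(((2:ℕ):ℝ) + 1) / 2) = -(3/2 : ℝ) := by norm_num
  have h2 : ((((2:ℕ):ℝ)) + 1) / 2 = (3/2 : ℝ) := by norm_num
  rw [h1, h2, Gamma_three_halves]
  have h3 : ((2*v)⁻¹ : ℝ) ^ (-(3/2 : ℝ)) = (2*v) ^ (3/2 : ℝ) :=
    rpow_inv_neg (by positivity) _
  have h4 : ((2*v) : ℝ) ^ (3/2 : ℝ) = (2*v) * Real.sqrt (2*v) := by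
    rw [show (3/2 : ℝ) = 1 + 1/2 by norm_num, Real.rpow_add (by positivity), Real.rpow_one,
      Real.sqrt_eq_rpow]
  rw [h3, h4]
  ring

lemma integral_Ioi_quartic_mul_exp (v : ℝ) (hv : 0 < v) :
    ∫ x in Ioi (0:ℝ), x ^ 4 * rexp (-(2*v)⁻¹ * x ^ 2)
      = (2*v)^2 * Real.sqrt (2*v) * (3 * Real.sqrt π) / 8 := by
  have hb : (0:ℝ) < (2*v)⁻¹ := by positivity
  rw [integral_Ioi_pow_mul_exp hb 4]
  have h1 : (-(((4:ℕ):ℝ) + 1) / 2) = -(5/2 : ℝ) := by norm_num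
  have h2 : ((((4:ℕ):ℝ)) + 1) / 2 = (5/2 : ℝ) := by norm_num
  rw [h1, h2, Gamma_five_halves]
  have h3 : ((2*v)⁻¹ : ℝ) ^ (-(5/2 : ℝ)) = (2*v) ^ (5/2 : ℝ) :=
    rpow_inv_neg (by positivity) _
  have h4 : ((2*v) : ℝ) ^ (5/2 : ℝ) = (2*v)^2 * Real.sqrt (2*v) := by
    rw [show (5/2 : ℝ) = 2 + 1/2 by norm_num, Real.rpow_add (by positivity),
      Real.sqrt_eq_rpow, show ((2:ℝ)) = ((2:ℕ):ℝ) by norm_num, Real.rpow_natCast]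
  rw [h3, h4]
  ring

lemma sqrt_two_pi_v (v : ℝ) (hv : 0 < v) :
    Real.sqrt (2 * π * v) = Real.sqrt (2*v) * Real.sqrt π := by
  rw [show 2*π*v = (2*v)*π by ring, Real.sqrt_mul (by positivity)]

lemma pdf_even (v : ℝ≥0) (z : ℝ) :
    gaussianPDFReal 0 v (-z) = gaussianPDFReal 0 v z := by
  simp [gaussianPDFReal, neg_sq]

lemma gaussianPDFReal_eq (v : ℝ≥0) (hv : 0 < v) (z : ℝ) :
    gaussianPDFReal 0 v z
      = (Real.sqrt (2 * π * v))⁻¹ * rexp (-(2 * (v:ℝ))⁻¹ * z ^ 2) := by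
  have hv' : (0:ℝ) < v := hv
  rw [gaussianPDFReal]
  congr 1
  rw [sub_zero]
  field_simp

lemma integral_even' {f : ℝ → ℝ} (heven : ∀ x, f (-x) = f x) :
    ∫ x, f x = 2 * ∫ x in Ioi (0:ℝ), f x := by
  have h : ∀ x : ℝ, f |x| = f x := by
    intro x
    rcases abs_choice x with h | h
    · rw [h]
    · rw [h, heven]
  calc ∫ x, f x = ∫ x, f |x| := by simp_rw [h]
  _ = 2 * ∫ x in Ioi (0:ℝ), f x := integral_comp_abs

lemma integral_odd' {f : ℝ → ℝ} (hodd : ∀ x, f (-x) = -f x) : ∫ x, f x = 0 := by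
  have A : MeasurableEmbedding fun x : ℝ => -x :=
    (Homeomorph.neg ℝ).measurableEmbedding
  have h1 : ∫ x, f (-x) = ∫ x, f x := by
    calc ∫ x, f (-x) = ∫ x, f x ∂(Measure.map (fun x : ℝ => -x) volume) :=
          (A.integral_map f).symm
    _ = ∫ x, f x := by rw [Measure.map_neg_eq_self]
  simp_rw [hodd] at h1
  rw [integral_neg] at h1
  linarith

lemma moment0 (v : ℝ≥0) (hv : 0 < v) :
    ∫ z, gaussianPDFReal 0 v z * z ^ 0 = 1 := by
  simp only [pow_zero, mul_one]
  exact integral_gaussianPDFReal_eq_one 0 hv.ne'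

lemma moment1 (v : ℝ≥0) :
    ∫ z, gaussianPDFReal 0 v z * z ^ 1 = 0 :=
  integral_odd' (fun z => by rw [pdf_even]; ring)

lemma moment3 (v : ℝ≥0) :
    ∫ z, gaussianPDFReal 0 v z * z ^ 3 = 0 :=
  integral_odd' (fun z => by rw [pdf_even]; ring)

lemma moment2 (v : ℝ≥0) (hv : 0 < v) :
    ∫ z, gaussianPDFReal 0 v z * z ^ 2 = v := by
  have hv' : (0:ℝ) < v := hv
  rw [integral_even' (fun z => by rw [pdf_even]; ring)]
  have hcong : ∫ z in Ioi (0:ℝ), gaussianPDFReal 0 v z * z ^ 2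
      = ∫ z in Ioi (0:ℝ), (Real.sqrt (2 * π * v))⁻¹ * (z ^ 2 * rexp (-(2*(v:ℝ))⁻¹ * z ^ 2)) := by
    refine setIntegral_congr_fun measurableSet_Ioi (fun z _ => ?_)
    rw [gaussianPDFReal_eq v hv]
    ring
  rw [hcong, integral_const_mul, integral_Ioi_sq_mul_exp (v:ℝ) hv',
    sqrt_two_pi_v (v:ℝ) hv']
  have h1 : Real.sqrt (2*(v:ℝ)) > 0 := by positivity
  have h2 : Real.sqrt π > 0 := by positivity
  field_simp
  ring

lemma moment4 (v : ℝ≥0) (hv : 0 < v) :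
    ∫ z, gaussianPDFReal 0 v z * z ^ 4 = 3 * (v:ℝ)^2 := by
  have hv' : (0:ℝ) < v := hv
  rw [integral_even' (fun z => by rw [pdf_even]; ring)]
  have hcong : ∫ z in Ioi (0:ℝ), gaussianPDFReal 0 v z * z ^ 4
      = ∫ z in Ioi (0:ℝ), (Real.sqrt (2 * π * v))⁻¹ * (z ^ 4 * rexp (-(2*(v:ℝ))⁻¹ * z ^ 2)) := by
    refine setIntegral_congr_fun measurableSet_Ioi (fun z _ => ?_)
    rw [gaussianPDFReal_eq v hv]
    ring
  rw [hcong, integral_const_mul, integral_Ioi_quartic_mul_exp (v:ℝ) hv',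
    sqrt_two_pi_v (v:ℝ) hv']
  have h1 : Real.sqrt (2*(v:ℝ)) > 0 := by positivity
  have h2 : Real.sqrt π > 0 := by positivity
  field_simp
  ring

lemma integrable_pow_mul_exp {b : ℝ} (hb : 0 < b) (k : ℕ) :
    Integrable (fun x : ℝ => x ^ k * rexp (-b * x ^ 2)) := by
  have h : (-1 : ℝ) < k := lt_of_lt_of_le neg_one_lt_zero (Nat.cast_nonneg k)
  simpa [Real.rpow_natCast] using integrable_rpow_mul_exp_neg_mul_sq hb h

lemma integrable_pdf_mul_pow (v : ℝ≥0) (hv : 0 < v) (k : ℕ) :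
    Integrable (fun z : ℝ => gaussianPDFReal 0 v z * z ^ k) := by
  have hv' : (0:ℝ) < v := hv
  have h : (fun z : ℝ => gaussianPDFReal 0 v z * z ^ k)
      = fun z => (Real.sqrt (2*π*(v:ℝ)))⁻¹ * (z ^ k * rexp (-(2*(v:ℝ))⁻¹ * z ^ 2)) :=
    funext fun z => by rw [gaussianPDFReal_eq v hv]; ring
  rw [h]
  exact (integrable_pow_mul_exp (by positivity) k).const_mul _

lemma integral_gaussianReal_eq (m : ℝ) (v : ℝ≥0) (hv : v ≠ 0) (g : ℝ → ℝ) :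
    ∫ y, g y ∂(gaussianReal m v) = ∫ y, gaussianPDFReal m v y * g y := by
  rw [gaussianReal_of_var_ne_zero m hv,
    show gaussianPDF m v = fun y => ((gaussianPDFReal m v y).toNNReal : ℝ≥0∞) from rfl,
    integral_withDensity_eq_integral_smul (measurable_gaussianPDFReal m v).real_toNNReal]
  refine integral_congr_ae (Filter.Eventually.of_forall fun y => ?_)
  simp only [NNReal.smul_def, smul_eq_mul]
  rw [Real.coe_toNNReal _ (gaussianPDFReal_nonneg m v y)]

lemma integrable_gaussianReal_iff (m : ℝ) (v : ℝ≥0) (hv : v ≠ 0) (g : ℝ → ℝ) :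
    Integrable g (gaussianReal m v)
      ↔ Integrable (fun y => gaussianPDFReal m v y * g y) volume := by
  rw [gaussianReal_of_var_ne_zero m hv,
    show gaussianPDF m v = fun y => ((gaussianPDFReal m v y).toNNReal : ℝ≥0∞) from rfl,
    integrable_withDensity_iff_integrable_coe_smul
      (measurable_gaussianPDFReal m v).real_toNNReal]
  simp_rw [smul_eq_mul, Real.coe_toNNReal _ (gaussianPDFReal_nonneg m v _)]

lemma shift_integral (v : ℝ≥0) (x : ℝ) (g : ℝ → ℝ) :
    ∫ y, gaussianPDFReal x v y * g (y - x) = ∫ z, gaussianPDFReal 0 v z * g z := by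
  have h : ∀ y : ℝ, gaussianPDFReal x v y = gaussianPDFReal 0 v (y - x) := fun y => by
    rw [gaussianPDFReal_sub, zero_add]
  simp_rw [h]
  exact integral_sub_right_eq_self (fun z => gaussianPDFReal 0 v z * g z) x

lemma gauss_poly (v : ℝ≥0) (hv : 0 < v) (c0 c1 c2 c3 c4 : ℝ) :
    ∫ z, gaussianPDFReal 0 v z * (c4*z^4 + c3*z^3 + c2*z^2 + c1*z^1 + c0*z^0)
      = c4 * (3*(v:ℝ)^2) + c2 * v + c0 := by
  have I := integrable_pdf_mul_pow v hv
  set p : ℝ → ℝ := gaussianPDFReal 0 v with hp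
  have h : (fun z : ℝ => p z * (c4*z^4 + c3*z^3 + c2*z^2 + c1*z^1 + c0*z^0))
      = fun z => c4 * (p z * z^4) + (c3 * (p z * z^3)
        + (c2 * (p z * z^2) + (c1 * (p z * z^1)
        + c0 * (p z * z^0)))) :=
    funext fun z => by ring
  have I1' : Integrable (fun z : ℝ => c1 * (p z * z^1) + c0 * (p z * z^0)) volume := by
    exact ((I 1).const_mul _).add ((I 0).const_mul _)
  have I2' : Integrable (fun z : ℝ => c2 * (p z * z^2)
      + (c1 * (p z * z^1) + c0 * (p z * z^0))) volume := by
    exact ((I 2).const_mul _).add I1'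
  have I3' : Integrable (fun z : ℝ => c3 * (p z * z^3) + (c2 * (p z * z^2)
      + (c1 * (p z * z^1) + c0 * (p z * z^0)))) volume := by
    exact ((I 3).const_mul _).add I2'
  rw [h, integral_add ((I 4).const_mul _) I3', integral_add ((I 3).const_mul _) I2',
    integral_add ((I 2).const_mul _) I1', integral_add ((I 1).const_mul _) ((I 0).const_mul _),
    integral_const_mul, integral_const_mul, integral_const_mul, integral_const_mul,
    integral_const_mul, hp]
  rw [moment0 v hv, moment1 v, moment2 v hv, moment3 v, moment4 v hv]
  ring

lemma integrable_pdf_poly (v : ℝ≥0) (hv : 0 < v) (c0 c1 c2 c3 c4 : ℝ) :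
    Integrable (fun z : ℝ =>
      gaussianPDFReal 0 v z * (c4*z^4 + c3*z^3 + c2*z^2 + c1*z^1 + c0*z^0)) volume := by
  have I := integrable_pdf_mul_pow v hv
  have h : (fun z : ℝ =>
      gaussianPDFReal 0 v z * (c4*z^4 + c3*z^3 + c2*z^2 + c1*z^1 + c0*z^0))
      = fun z => c4 * (gaussianPDFReal 0 v z * z^4) + (c3 * (gaussianPDFReal 0 v z * z^3)
        + (c2 * (gaussianPDFReal 0 v z * z^2) + (c1 * (gaussianPDFReal 0 v z * z^1)
        + c0 * (gaussianPDFReal 0 v z * z^0)))) :=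
    funext fun z => by ring
  rw [h]
  exact ((I 4).const_mul _).add (((I 3).const_mul _).add (((I 2).const_mul _).add
    (((I 1).const_mul _).add ((I 0).const_mul _))))

lemma pdf_shift (v : ℝ≥0) (x y : ℝ) :
    gaussianPDFReal x v y = gaussianPDFReal 0 v (y - x) := by
  rw [gaussianPDFReal_sub, zero_add]

lemma integrable_shift_poly (v : ℝ≥0) (hv : 0 < v) (x c0 c1 c2 c3 c4 : ℝ) :
    Integrable (fun y : ℝ => gaussianPDFReal x v y *
      (c4*(y-x)^4 + c3*(y-x)^3 + c2*(y-x)^2 + c1*(y-x)^1 + c0*(y-x)^0)) volume := by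
  have h := (integrable_pdf_poly v hv c0 c1 c2 c3 c4).comp_sub_right x
  refine h.congr (Filter.Eventually.of_forall fun y => ?_)
  simp only []
  rw [← pdf_shift]

lemma gauss_poly_shift (v : ℝ≥0) (hv : 0 < v) (x c0 c1 c2 c3 c4 : ℝ) :
    ∫ y, gaussianPDFReal x v y *
      (c4*(y-x)^4 + c3*(y-x)^3 + c2*(y-x)^2 + c1*(y-x)^1 + c0*(y-x)^0)
      = c4 * (3*(v:ℝ)^2) + c2 * v + c0 := by
  have h := shift_integral v x (fun z => c4*z^4 + c3*z^3 + c2*z^2 + c1*z^1 + c0*z^0)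
  exact h.trans (gauss_poly v hv c0 c1 c2 c3 c4)

end AWGNAux

open AWGNAux in
/-- For the AWGN channel `W(·|x) = N(x, N)` and output distribution
`Q* = N(0, Γ + N)`, with `Y ~ W(·|x)`,
`Var(log (W(Y|x)/Q*(Y))) = (Γ² + 2 x² N) / (2 (N + Γ)²)`. -/
theorem awgn_llr_variance (N Γ : ℝ≥0) (hN : 0 < N) (hΓ : 0 < Γ) (x : ℝ) :
    variance
        (fun y => Real.log (gaussianPDFReal x N y / gaussianPDFReal 0 (Γ + N) y))
        (gaussianReal x N)
      = ((Γ : ℝ) ^ 2 + 2 * x ^ 2 * N) / (2 * ((N : ℝ) + Γ) ^ 2) := by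
  have hN' : (0:ℝ) < (N:ℝ) := hN
  have hΓ' : (0:ℝ) < (Γ:ℝ) := hΓ
  set s : ℝ := (Γ:ℝ) + (N:ℝ) with hs
  have hs' : (0:ℝ) < s := by positivity
  set a : ℝ := 1/(2*s) - 1/(2*(N:ℝ)) with ha
  set b : ℝ := x / s with hb
  set C : ℝ := Real.log (Real.sqrt (2*π*s)) - Real.log (Real.sqrt (2*π*(N:ℝ)))
      + x^2/(2*s) with hC
  have hcast : ((Γ + N : ℝ≥0) : ℝ) = s := by push_cast; rw [hs]
  have hfun : (fun y => Real.log (gaussianPDFReal x N y / gaussianPDFReal 0 (Γ+N) y))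
      = fun y => a*(y-x)^2 + b*(y-x) + C := by
    funext y
    have h1 : gaussianPDFReal x N y ≠ 0 :=
      (gaussianPDFReal_pos _ _ _ hN.ne').ne'
    have h2 : gaussianPDFReal 0 (Γ+N) y ≠ 0 :=
      (gaussianPDFReal_pos _ _ _ (by positivity)).ne'
    rw [Real.log_div h1 h2]
    simp only [gaussianPDFReal, hcast]
    rw [Real.log_mul (by positivity) (Real.exp_ne_zero _),
      Real.log_mul (by positivity) (Real.exp_ne_zero _),
      Real.log_exp, Real.log_exp, Real.log_inv, Real.log_inv, ha, hb, hC]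
    field_simp
    ring
  rw [hfun]
  have hmem : MemLp (fun y : ℝ => a*(y-x)^2 + b*(y-x) + C) 2 (gaussianReal x N) := by
    have hcont : Continuous (fun y : ℝ => a*(y-x)^2 + b*(y-x) + C) := by continuity
    rw [memLp_two_iff_integrable_sq hcont.aestronglyMeasurable,
      integrable_gaussianReal_iff x N hN.ne']
    have h := integrable_shift_poly N hN x (C^2) (2*b*C) (b^2+2*a*C) (2*a*b) (a^2)
    refine h.congr (Filter.Eventually.of_forall fun y => ?_)
    simp only []
    ring
  rw [variance_eq_integral hmem.aemeasurable]
  have hmean : ∫ y, (a*(y-x)^2 + b*(y-x) + C) ∂(gaussianReal x N) = a*(N:ℝ) + C := by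
    rw [integral_gaussianReal_eq x N hN.ne']
    have h := gauss_poly_shift N hN x C b a 0 0
    rw [show a*(N:ℝ) + C = 0*(3*((N:ℝ))^2) + a*(N:ℝ) + C from by ring, ← h]
    refine integral_congr_ae (Filter.Eventually.of_forall fun y => ?_)
    simp only []
    ring
  rw [hmean, integral_gaussianReal_eq x N hN.ne']
  have h := gauss_poly_shift N hN x (a^2*(N:ℝ)^2) (-(2*a*b*(N:ℝ)))
      (b^2 - 2*a^2*(N:ℝ)) (2*a*b) (a^2)
  rw [show ((Γ:ℝ)^2 + 2*x^2*N)/(2*((N:ℝ)+Γ)^2)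
      = a^2*(3*((N:ℝ))^2) + (b^2 - 2*a^2*(N:ℝ))*(N:ℝ) + a^2*(N:ℝ)^2 from by
    rw [ha, hb, hs]
    field_simp
    ring, ← h]
  refine integral_congr_ae (Filter.Eventually.of_forall fun y => ?_)
  simp only [Pi.sub_apply, Pi.pow_apply]
  ring
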